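/- Let S be a three-dimensional non-split simple Lie algebra over a field F of characteristic zero, and let R be a finite-dimensional irreducible S-module. Then for any s ∈ S, the module R has an ad s-invariant (i.e., invariant under the action of s) subspace of dimension at most two. -/

import Mathlib

open Module LieModule TensorProduct

attribute [local instance] LieRing.ofAssociativeRing

lemma sl2_eigenvalue_int {K V : Type*} [Field K] [CharZero K] [AddCommGroup V] [Module K V]
    [Module.Finite K V] {H E Fo : Module.End K V} (t : IsSl2Triple H E Fo)
    {v : V} {μ : K} (hv : v ≠ 0) (hHv : H v = μ • v) : ∃ m : ℤ, μ = m := by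
  have h2 : H * E - E * H = (2 : K) • E := by rw [← Ring.lie_def]; exact t.lie_h_e_smul K
  have hHE : H * E = E * H + (2 : K) • E := by rw [← h2]; abel
  have hstep : ∀ k : ℕ, H ((E ^ k) v) = (μ + 2 * k) • ((E ^ k) v) := by
    intro k
    induction k with
    | zero => simpa using hHv
    | succ k ih =>
      have h1 : (E ^ (k+1)) v = E ((E ^ k) v) := by
        rw [pow_succ']; rfl
      rw [h1, show H (E ((E^k) v)) = (H * E) ((E^k) v) from rfl, hHE]
      simp only [LinearMap.add_apply, LinearMap.smul_apply, Module.End.mul_apply, ih]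
      rw [map_smul]
      push_cast
      module
  -- eigenvalues are roots of the minpoly, hence finitely many
  have hfin : ∃ k : ℕ, (E ^ k) v = 0 := by
    by_contra hcon
    push_neg at hcon
    have hint : IsIntegral K H := Algebra.IsIntegral.isIntegral H
    have hmp : minpoly K H ≠ 0 := minpoly.ne_zero hint
    have hroots : Set.Finite {x : K | (minpoly K H).IsRoot x} :=
      Polynomial.finite_setOf_isRoot hmp
    have hsub : Set.range (fun k : ℕ => μ + 2 * k) ⊆ {x : K | (minpoly K H).IsRoot x} := by
      rintro _ ⟨k, rfl⟩
      have hev : H.HasEigenvalue (μ + 2 * k) := by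
        apply Module.End.hasEigenvalue_of_hasEigenvector (x := (E ^ k) v)
        exact ⟨Module.End.mem_eigenspace_iff.mpr (hstep k), hcon k⟩
      exact (Module.End.hasEigenvalue_iff_isRoot).mp hev
    have : (Set.range (fun k : ℕ => μ + 2 * k)).Infinite := by
      apply Set.infinite_range_of_injective
      intro a b hab
      field_simp at hab
      simpa using hab
    exact this (hroots.subset hsub)
  obtain ⟨N, hN1, hN2⟩ := Nat.exists_not_and_succ_of_not_zero_of_exists
    (p := fun k => (E ^ k) v = 0) (by simpa using hv) hfin
  have P : t.HasPrimitiveVectorWith ((E ^ N) v) (μ + 2 * N) :=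
    { ne_zero := hN1
      lie_h := hstep N
      lie_e := by
        show E ((E ^ N) v) = 0
        rw [← Module.End.mul_apply, ← pow_succ']
        exact hN2 }
  obtain ⟨n, hn⟩ := P.exists_nat
  refine ⟨(n : ℤ) - 2 * N, ?_⟩
  push_cast
  linear_combination hn

set_option maxHeartbeats 1000000 in
lemma sl2_triple_of_relations {K V : Type*} [Field K] [CharZero K] [AddCommGroup V] [Module K V]
    {A B C : Module.End K V} {a' γ' α : K} (hα : α ^ 2 = a') (hα0 : α ≠ 0)
    (hγ'0 : γ' ≠ 0) (hA0 : A ≠ 0)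
    (h1 : A * B - B * A = C) (h2 : A * C - C * A = a' • B)
    (h3 : B * C - C * B = γ' • A) :
    IsSl2Triple ((2 * α⁻¹) • A) (α • B + C) ((a' * γ')⁻¹ • (C - α • B)) := by
  have ha'0 : a' ≠ 0 := by rintro rfl; refine hα0 ?_; have h := hα; rw [pow_two] at h; exact mul_self_eq_zero.mp h
  have h2ne : (2 : K) ≠ 0 := two_ne_zero
  have e1 : A * B = C + B * A := by rw [← h1]; abel
  have e2 : A * C = a' • B + C * A := by rw [← h2]; abel
  have e3 : B * C = γ' • A + C * B := by rw [← h3]; abel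
  constructor
  · exact smul_ne_zero (mul_ne_zero h2ne (inv_ne_zero hα0)) hA0
  · rw [Ring.lie_def]
    simp only [mul_add, add_mul, mul_sub, sub_mul, smul_mul_assoc, mul_smul_comm,
      smul_sub, smul_add, e1, e2, e3]
    match_scalars <;> field_simp <;> ring_nf <;>
      first
      | rfl
      | (rw [show a' = α ^ 2 from hα.symm]; try ring)
  · rw [Ring.lie_def]
    rw [show (2 : ℕ) • (α • B + C) = (2 : K) • (α • B + C) by rw [two_smul, two_smul]]
    simp only [mul_add, add_mul, mul_sub, sub_mul, smul_mul_assoc, mul_smul_comm,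
      smul_sub, smul_add, e1, e2, e3]
    match_scalars <;> field_simp <;> ring_nf <;>
      first
      | rfl
      | (rw [show a' = α ^ 2 from hα.symm]; try ring)
  · rw [Ring.lie_def]
    rw [show -((2 : ℕ) • ((a' * γ')⁻¹ • (C - α • B)))
        = -((2 : K) • ((a' * γ')⁻¹ • (C - α • B))) by rw [two_smul, two_smul]]
    simp only [mul_add, add_mul, mul_sub, sub_mul, smul_mul_assoc, mul_smul_comm,
      smul_sub, smul_add, e1, e2, e3]
    match_scalars <;> field_simp <;> ring_nf <;>
      first
      | rfl
      | (rw [show a' = α ^ 2 from hα.symm]; try ring)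



set_option maxHeartbeats 1000000 in
lemma gein_operator {F R : Type*} [Field F] [CharZero F] [AddCommGroup R] [Module F R]
    [Module.Finite F R] [Nontrivial R] {fE uE wE : Module.End F R} {a γ : F} (ha : a ≠ 0) (hγ : γ ≠ 0)
    (h1 : fE * uE - uE * fE = wE) (h2 : fE * wE - wE * fE = a • uE)
    (h3 : uE * wE - wE * uE = γ • fE) :
    ∃ (v₀ : R) (c₀ : F), v₀ ≠ 0 ∧ fE (fE v₀) = c₀ • v₀ := by
  classical
  set K := AlgebraicClosure F with hK
  let Φ := Module.End.baseChangeHom F K R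
  set A := Φ fE with hA
  set B := Φ uE with hB
  set C := Φ wE with hC
  set a' := algebraMap F K a with ha'
  set γ' := algebraMap F K γ with hγ'
  have ha'0 : a' ≠ 0 := by
    simpa [ha'] using (map_ne_zero_iff _ (algebraMap F K).injective).mpr ha
  have hPhi : ∀ y : Module.End F R, Φ y = LinearMap.baseChange K y := fun y => rfl
  have hsm : ∀ (c : F) (x : Module.End F R), Φ (c • x) = algebraMap F K c • Φ x := by
    intro c x
    rw [hPhi, hPhi]
    simp
  have h1' : A * B - B * A = C := by rw [hA, hB, hC, ← map_mul, ← map_mul, ← map_sub Φ, h1]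
  have h2' : A * C - C * A = a' • B := by
    rw [hA, hB, hC, ← map_mul, ← map_mul, ← map_sub Φ, h2, hsm]
  have h3' : B * C - C * B = γ' • A := by
    rw [hA, hB, hC, ← map_mul, ← map_mul, ← map_sub Φ, h3, hsm]
  -- the base-changed space
  have hnt : Nontrivial (K ⊗[F] R) := by
    apply Module.nontrivial_of_finrank_pos (R := K)
    rw [Module.finrank_baseChange]
    exact Module.finrank_pos
  have hfd : FiniteDimensional K (K ⊗[F] R) := inferInstance
  -- an eigenvalue of A
  obtain ⟨μ, hμ⟩ := Module.End.exists_eigenvalue A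
  obtain ⟨v, hv⟩ := hμ.exists_hasEigenvector
  have hvne : v ≠ 0 := hv.right
  have hAv : A v = μ • v := hv.apply_eq_smul
  -- square root of a'
  obtain ⟨α, hα⟩ : ∃ α : K, α ^ 2 = a' := IsAlgClosed.exists_pow_nat_eq a' (n := 2) (by norm_num)
  have hα0 : α ≠ 0 := by rintro rfl; rw [← hα] at ha'0; simp at ha'0
  -- find c₀ : F with μ ^ 2 = algebraMap F K c₀
  obtain ⟨c₀, hc₀⟩ : ∃ c₀ : F, μ ^ 2 = algebraMap F K c₀ := by
    by_cases hA0 : A = 0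
    · refine ⟨0, ?_⟩
      rw [hA0] at hAv
      simp only [LinearMap.zero_apply] at hAv
      have : μ = 0 := by
        rcases smul_eq_zero.mp hAv.symm with h | h
        · exact h
        · exact absurd h hvne
      simp [this]
    · -- build an sl2 triple
      have hγ'0 : γ' ≠ 0 := by
        simpa [hγ'] using (map_ne_zero_iff _ (algebraMap F K).injective).mpr hγ
      have t := sl2_triple_of_relations hα hα0 hγ'0 hA0 h1' h2' h3'
      set H := (2 * α⁻¹) • A with hH
      have hHv : H v = ((2 * α⁻¹) * μ) • v := by
        rw [hH]
        rw [LinearMap.smul_apply, hAv, smul_smul]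
      obtain ⟨m, hm⟩ := sl2_eigenvalue_int t hvne hHv
      refine ⟨((m : F) ^ 2 * a) / 4, ?_⟩
      have hμ : μ = (m : K) * α / 2 := by
        rw [← hm, mul_right_comm 2 α⁻¹ μ, mul_assoc (2 * μ), inv_mul_cancel₀ hα0, mul_one,
          mul_div_cancel_left₀ μ two_ne_zero]
      rw [hμ, map_div₀, map_mul, map_pow, map_intCast, map_ofNat, ← ha']
      rw [← hα]
      push_cast
      ring
  -- now descend: fE ∘ fE - c₀ • 1 is not injective
  set g : Module.End F R := fE * fE - c₀ • (1 : Module.End F R) with hg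
  have hginj : ¬ Function.Injective g := by
    intro hinj
    have hbij : Function.Bijective g := ⟨hinj, (LinearMap.injective_iff_surjective).mp hinj⟩
    set e := LinearEquiv.ofBijective (g : R →ₗ[F] R) hbij with he
    have hcomp : (e.symm : R →ₗ[F] R) ∘ₗ (g : R →ₗ[F] R) = LinearMap.id := by
      ext x
      simp only [LinearMap.comp_apply, LinearMap.id_apply, LinearEquiv.coe_coe]
      rw [show g x = e x from rfl, e.symm_apply_apply]
    have hleft : ∀ x : K ⊗[F] R,
        LinearMap.baseChange K (e.symm : R →ₗ[F] R) (LinearMap.baseChange K (g : R →ₗ[F] R) x)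
          = x := by
      intro x
      rw [← LinearMap.comp_apply, ← LinearMap.baseChange_comp, hcomp, LinearMap.baseChange_id,
        LinearMap.id_apply]
    have hzero : LinearMap.baseChange K (g : R →ₗ[F] R) v = 0 := by
      have : LinearMap.baseChange K (g : R →ₗ[F] R) = Φ g := (hPhi g).symm
      rw [this, hg, map_sub, map_mul, hsm, map_one]
      simp only [LinearMap.sub_apply, Module.End.mul_apply, LinearMap.smul_apply,
        Module.End.one_apply, hAv]
      rw [← hA, hAv, map_smul, hAv, smul_smul, ← pow_two, hc₀]
      simp
    have := hleft v
    rw [hzero, map_zero] at this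
    exact hvne this.symm
  rw [← LinearMap.ker_eq_bot] at hginj
  obtain ⟨v₀, hv₀mem, hv₀ne⟩ := Submodule.ne_bot_iff _ |>.mp hginj
  refine ⟨v₀, c₀, hv₀ne, ?_⟩
  have : g v₀ = 0 := hv₀mem
  rw [hg] at this
  simp only [LinearMap.sub_apply, Module.End.mul_apply, LinearMap.smul_apply,
    Module.End.one_apply, sub_eq_zero] at this
  exact this

set_option maxHeartbeats 1000000 in
/-- Gein's lemma: let `S` be a three-dimensional non-split simple Lie algebra over
a field `F` of characteristic zero (non-split: no `ad s` has a nonzero eigenvalue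
in `F`), and let `R` be a finite-dimensional irreducible `S`-module. Then for any
`s ∈ S`, `R` has a nonzero `s`-invariant subspace of dimension at most two. -/
theorem gein_invariant_subspace {F : Type*} [Field F] [CharZero F]
    {S : Type*} [LieRing S] [LieAlgebra F S] [Module.Finite F S]
    (hdim : Module.finrank F S = 3) (hsimple : LieAlgebra.IsSimple F S)
    (hnonsplit : ∀ (s v : S) (c : F), v ≠ 0 → ⁅s, v⁆ = c • v → c = 0)
    {R : Type*} [AddCommGroup R] [Module F R] [LieRingModule S R] [LieModule F S R]
    [Module.Finite F R] (hRnt : Nontrivial R)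
    (hirr : ∀ U : LieSubmodule F S R, U = ⊥ ∨ U = ⊤) :
    ∀ s : S, ∃ U : Submodule F R, U ≠ ⊥ ∧ Module.finrank F U ≤ 2 ∧
      ∀ u ∈ U, ⁅s, u⁆ ∈ U := by
  intro s
  haveI := hsimple
  haveI : FiniteDimensional F S := ‹Module.Finite F S›
  haveI : FiniteDimensional F R := ‹Module.Finite F R›
  have h1le : ∀ x : R, Module.finrank F (Submodule.span F {x}) ≤ 1 := by
    intro x
    rcases eq_or_ne x 0 with rfl | hx
    · rw [Submodule.span_zero_singleton]
      simp
    · rw [finrank_span_singleton hx]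
  by_cases hs0 : ∀ r : R, ⁅s, r⁆ = 0
  · obtain ⟨v, hv⟩ := exists_ne (0 : R)
    refine ⟨Submodule.span F {v}, ?_, le_trans (h1le v) one_le_two, ?_⟩
    · simpa [Submodule.span_singleton_eq_bot] using hv
    · intro u _
      rw [hs0]
      exact Submodule.zero_mem _
  push_neg at hs0
  obtain ⟨r0, hr0⟩ := hs0
  have hsne : s ≠ 0 := by rintro rfl; exact hr0 (zero_lie r0)
  set T : Module.End F S := (LieAlgebra.ad F S) s with hT
  have hTapp : ∀ x, T x = ⁅s, x⁆ := fun x => rfl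
  have hTs : T s = 0 := by rw [hTapp, lie_self]
  have hTne : T ≠ 0 := by
    intro h
    apply hsne
    have hscen : s ∈ LieAlgebra.center F S := by
      rw [LieModule.mem_maxTrivSubmodule]
      intro x
      rw [← lie_skew, show ⁅s, x⁆ = T x from (hTapp x).symm, h]
      simp
    rwa [LieAlgebra.center_eq_bot, LieSubmodule.mem_bot] at hscen
  have hrn := LinearMap.finrank_range_add_finrank_ker T
  rw [hdim] at hrn
  by_cases hker2 : 2 ≤ Module.finrank F (LinearMap.ker T)
  · -- degenerate case: kernel of ad s is too big; derive a contradiction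
    exfalso
    have hrle : Module.finrank F (LinearMap.range T) ≤ 1 := by omega
    obtain ⟨u₀, hu₀⟩ : ∃ u₀, T u₀ ≠ 0 := by
      by_contra h
      push_neg at h
      exact hTne (LinearMap.ext fun x => h x)
    set w₀ := T u₀ with hw₀def
    have hw₀ : w₀ ≠ 0 := hu₀
    have hspan : LinearMap.range T = Submodule.span F {w₀} := by
      symm
      apply Submodule.eq_of_le_of_finrank_le
      · rw [Submodule.span_le, Set.singleton_subset_iff]
        exact ⟨u₀, rfl⟩
      · rw [finrank_span_singleton hw₀]
        exact hrle
    have hkw : ∀ k ∈ LinearMap.ker T, ⁅k, w₀⁆ = 0 := by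
      intro k hk
      have hk' : ⁅s, k⁆ = 0 := by rw [← hTapp]; exact hk
      have h1 : T ⁅k, u₀⁆ = ⁅k, w₀⁆ := by
        rw [hTapp, leibniz_lie, hk', zero_lie, zero_add, ← hTapp]
      have h2 : ⁅k, w₀⁆ ∈ LinearMap.range T := ⟨⁅k, u₀⁆, h1⟩
      rw [hspan, Submodule.mem_span_singleton] at h2
      obtain ⟨c, hc⟩ := h2
      have hc0 := hnonsplit k w₀ c hw₀ hc.symm
      rw [← hc, hc0, zero_smul]
    let I : LieIdeal F S :=
      { LinearMap.ker T with
        lie_mem := by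
          intro x m hm
          have hm' : ⁅s, m⁆ = 0 := by rw [← hTapp]; exact hm
          show ⁅x, m⁆ ∈ LinearMap.ker T
          rw [LinearMap.mem_ker, hTapp, leibniz_lie, hm', lie_zero, add_zero]
          have hTx : T x ∈ LinearMap.range T := ⟨x, rfl⟩
          rw [hspan, Submodule.mem_span_singleton] at hTx
          obtain ⟨c, hc⟩ := hTx
          rw [show ⁅s, x⁆ = T x from (hTapp x).symm, ← hc, smul_lie, ← lie_skew,
            hkw m hm, neg_zero, smul_zero] }
    have hmemI : ∀ x, x ∈ I ↔ x ∈ LinearMap.ker T := fun x => Iff.rfl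
    rcases hsimple.eq_bot_or_eq_top I with hI | hI
    · have : s ∈ I := (hmemI s).mpr hTs
      rw [hI, LieSubmodule.mem_bot] at this
      exact hsne this
    · have : u₀ ∈ I := by rw [hI]; exact LieSubmodule.mem_top u₀
      exact hu₀ ((hmemI u₀).mp this)
  -- main case : ker (ad s) = span {s}
  push_neg at hker2
  have hks : LinearMap.ker T = Submodule.span F {s} := by
    symm
    apply Submodule.eq_of_le_of_finrank_le
    · rw [Submodule.span_le, Set.singleton_subset_iff]
      exact hTs
    · rw [finrank_span_singleton hsne]
      omega
  have hkrk : Module.finrank F (LinearMap.ker T) = 1 := by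
    rw [hks, finrank_span_singleton hsne]
  have hrk : Module.finrank F (LinearMap.range T) = 2 := by omega
  obtain ⟨u, hurange, huker⟩ : ∃ u, u ∈ LinearMap.range T ∧ u ∉ LinearMap.ker T := by
    by_contra h
    push_neg at h
    have hle : LinearMap.range T ≤ LinearMap.ker T := fun x hx => h x hx
    have := Submodule.finrank_mono hle
    omega
  set w := T u with hwdef
  have hwne : w ≠ 0 := by
    intro h
    exact huker (by rwa [LinearMap.mem_ker])
  have hune : u ≠ 0 := by rintro rfl; exact huker (Submodule.zero_mem _)
  have hw_nmem : ∀ c : F, c • u ≠ w := by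
    intro c hc
    have h0 := hnonsplit s u c hune (by rw [← hTapp, ← hwdef, ← hc])
    rw [h0, zero_smul] at hc
    exact hwne hc.symm
  have hli : LinearIndependent F ![u, w] := (LinearIndependent.pair_iff' hune).mpr hw_nmem
  have hcoord : ∀ p q : F, p • u + q • w = 0 → p = 0 ∧ q = 0 := fun p q h =>
    hli.eq_zero_of_pair h
  have hspan2 : LinearMap.range T = Submodule.span F {u, w} := by
    symm
    apply Submodule.eq_of_le_of_finrank_le
    · rw [Submodule.span_le]
      rintro x (rfl | rfl)
      · exact hurange
      · exact ⟨u, rfl⟩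
    · have hcard : Module.finrank F (Submodule.span F {u, w}) = 2 := by
        have := finrank_span_eq_card (R := F) hli
        rwa [Matrix.range_cons_cons_empty, Fintype.card_fin] at this
      rw [hcard, hrk]
  have hTw : T w ∈ LinearMap.range T := ⟨w, rfl⟩
  rw [hspan2, Submodule.mem_span_pair] at hTw
  obtain ⟨a, b, hab⟩ := hTw
  -- s ∉ range T
  have hs_nmem : s ∉ LinearMap.range T := by
    intro hs
    rw [hspan2, Submodule.mem_span_pair] at hs
    obtain ⟨p, q, hpq⟩ := hs
    have hTexp : (q * a) • u + (p + q * b) • w = 0 := by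
      have h0 := congrArg T hpq
      rw [hTs, map_add, map_smul, map_smul, ← hwdef, ← hab] at h0
      rw [← h0]
      module
    obtain ⟨hqa, hpqb⟩ := hcoord _ _ hTexp
    rcases eq_or_ne q 0 with rfl | hq
    · rw [zero_mul, add_zero] at hpqb
      rw [hpqb, zero_smul, zero_smul, zero_add] at hpq
      exact hsne hpq.symm
    · have ha0 : a = 0 := by
        rcases mul_eq_zero.mp hqa with h | h
        · exact absurd h hq
        · exact h
      have hTwb : ⁅s, w⁆ = b • w := by
        rw [← hTapp, ← hab, ha0, zero_smul, zero_add]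
      have hb0 : b = 0 := hnonsplit s w b hwne hTwb
      have hp0 : p = 0 := by
        rw [hb0, mul_zero, add_zero] at hpqb
        exact hpqb
      rw [hp0, zero_smul, zero_add] at hpq
      -- s = q • w
      have hsw : ⁅s, u⁆ = q⁻¹ • s := by
        rw [show ⁅s, u⁆ = w from (hTapp u).symm, ← hpq, smul_smul, inv_mul_cancel₀ hq,
          one_smul]
      have : ⁅u, s⁆ = (-q⁻¹) • s := by
        rw [← lie_skew, hsw, neg_smul]
      have h0 := hnonsplit u s (-q⁻¹) hsne this
      rw [neg_eq_zero, inv_eq_zero] at h0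
      exact hq h0
  have htop : Submodule.span F {s} ⊔ LinearMap.range T = ⊤ := by
    apply Submodule.eq_top_of_finrank_eq
    have hinf : Submodule.span F {s} ⊓ LinearMap.range T = ⊥ := by
      rw [Submodule.eq_bot_iff]
      intro x hx
      rw [Submodule.mem_inf] at hx
      obtain ⟨hx1, hx2⟩ := hx
      rw [Submodule.mem_span_singleton] at hx1
      obtain ⟨c, rfl⟩ := hx1
      rcases eq_or_ne c 0 with rfl | hc
      · rw [zero_smul]
      · exfalso
        apply hs_nmem
        have := Submodule.smul_mem (LinearMap.range T) c⁻¹ hx2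
        rwa [smul_smul, inv_mul_cancel₀ hc, one_smul] at this
    have hsum := Submodule.finrank_sup_add_finrank_inf_eq (Submodule.span F {s})
      (LinearMap.range T)
    rw [hinf, finrank_bot, add_zero, finrank_span_singleton hsne, hrk] at hsum
    rw [hdim]
    omega
  by_cases huw : ⁅u, w⁆ = 0
  · -- range T would be a proper nonzero ideal
    exfalso
    have hgen : ∀ m ∈ LinearMap.range T, ⁅s, m⁆ ∈ LinearMap.range T ∧
        ⁅u, m⁆ ∈ LinearMap.range T ∧ ⁅w, m⁆ ∈ LinearMap.range T := by
      intro m hm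
      rw [hspan2, Submodule.mem_span_pair] at hm
      obtain ⟨p, q, rfl⟩ := hm
      refine ⟨⟨p • u + q • w, rfl⟩, ?_, ?_⟩
      · have : ⁅u, p • u + q • w⁆ = (0 : S) := by
          rw [lie_add, lie_smul, lie_smul, lie_self, huw, smul_zero, smul_zero, add_zero]
        rw [this]
        exact Submodule.zero_mem _
      · have : ⁅w, p • u + q • w⁆ = (0 : S) := by
          rw [lie_add, lie_smul, lie_smul, lie_self, ← lie_skew w u, huw, neg_zero,
            smul_zero, smul_zero, add_zero]
        rw [this]
        exact Submodule.zero_mem _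
    have hlie : ∀ (x m : S), m ∈ LinearMap.range T → ⁅x, m⁆ ∈ LinearMap.range T := by
      intro x m hm
      obtain ⟨h1, h2, h3⟩ := hgen m hm
      have hx : x ∈ Submodule.span F {s} ⊔ LinearMap.range T := by
        rw [htop]; exact Submodule.mem_top
      rw [Submodule.mem_sup] at hx
      obtain ⟨y, hy, z, hz, rfl⟩ := hx
      rw [Submodule.mem_span_singleton] at hy
      obtain ⟨c, rfl⟩ := hy
      rw [hspan2, Submodule.mem_span_pair] at hz
      obtain ⟨p, q, rfl⟩ := hz
      rw [add_lie, smul_lie, add_lie, smul_lie, smul_lie]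
      exact Submodule.add_mem _ (Submodule.smul_mem _ c h1)
        (Submodule.add_mem _ (Submodule.smul_mem _ p h2) (Submodule.smul_mem _ q h3))
    let I : LieIdeal F S := { LinearMap.range T with lie_mem := fun {x m} hm => hlie x m hm }
    have hmemI : ∀ x, x ∈ I ↔ x ∈ LinearMap.range T := fun x => Iff.rfl
    rcases hsimple.eq_bot_or_eq_top I with hI | hI
    · have : w ∈ I := (hmemI w).mpr ⟨u, rfl⟩
      rw [hI, LieSubmodule.mem_bot] at this
      exact hwne this
    · have : s ∈ I := by rw [hI]; exact LieSubmodule.mem_top s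
      exact hs_nmem ((hmemI s).mp this)
  · -- the good case: build the sl2-like relations
    have hbuw : T ⁅u, w⁆ = b • ⁅u, w⁆ := by
      rw [hTapp, leibniz_lie]
      have h1 : ⁅s, u⁆ = w := by rw [← hTapp]
      have h2 : ⁅s, w⁆ = a • u + b • w := by rw [← hTapp, ← hab]
      rw [h1, h2, lie_self, zero_add, lie_add, lie_smul, lie_smul, lie_self, smul_zero,
        zero_add]
    have hb0 : b = 0 := hnonsplit s ⁅u, w⁆ b huw (by rw [← hTapp]; exact hbuw)
    have huwker : ⁅u, w⁆ ∈ LinearMap.ker T := by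
      rw [LinearMap.mem_ker, hbuw, hb0, zero_smul]
    rw [hks, Submodule.mem_span_singleton] at huwker
    obtain ⟨γ, hγs⟩ := huwker
    have hγ : γ ≠ 0 := by
      rintro rfl
      rw [zero_smul] at hγs
      exact huw hγs.symm
    have hsw : ⁅s, w⁆ = a • u := by
      rw [← hTapp, ← hab, hb0, zero_smul, add_zero]
    have ha : a ≠ 0 := by
      intro ha0
      rw [ha0, zero_smul] at hsw
      have hwker : w ∈ LinearMap.ker T := by rw [LinearMap.mem_ker, hTapp]; exact hsw
      rw [hks, Submodule.mem_span_singleton] at hwker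
      obtain ⟨c, hc⟩ := hwker
      have hus : ⁅u, s⁆ = (-c) • s := by
        rw [← lie_skew, show ⁅s, u⁆ = w from (hTapp u).symm, ← hc, neg_smul]
      have h0 := hnonsplit u s (-c) hsne hus
      rw [neg_eq_zero] at h0
      rw [h0, zero_smul] at hc
      exact hwne hc.symm
    -- move to the representation
    haveI := hRnt
    set fE := LieModule.toEnd F S R s with hfE
    set uE := LieModule.toEnd F S R u with huE
    set wE := LieModule.toEnd F S R w with hwE
    have hmap : ∀ (x y : S), LieModule.toEnd F S R ⁅x, y⁆ =
        LieModule.toEnd F S R x * LieModule.toEnd F S R y -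
          LieModule.toEnd F S R y * LieModule.toEnd F S R x := by
      intro x y
      rw [LieHom.map_lie, Ring.lie_def]
    have h1 : fE * uE - uE * fE = wE := by
      rw [hfE, huE, hwE, ← hmap, show ⁅s, u⁆ = w from by rw [← hTapp]]
    have h2 : fE * wE - wE * fE = a • uE := by
      rw [hfE, huE, hwE, ← hmap, hsw, map_smul]
    have h3 : uE * wE - wE * uE = γ • fE := by
      rw [hfE, huE, hwE, ← hmap, ← hγs, map_smul]
    obtain ⟨v₀, c₀, hv₀, hfv₀⟩ := gein_operator ha hγ h1 h2 h3
    have hfapp : ∀ r : R, fE r = ⁅s, r⁆ := fun r => rfl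
    refine ⟨Submodule.span F {v₀} ⊔ Submodule.span F {⁅s, v₀⁆}, ?_, ?_, ?_⟩
    · intro hbot
      apply hv₀
      have : v₀ ∈ Submodule.span F {v₀} ⊔ Submodule.span F {⁅s, v₀⁆} :=
        Submodule.mem_sup_left (Submodule.mem_span_singleton_self v₀)
      rwa [hbot, Submodule.mem_bot] at this
    · have hsum := Submodule.finrank_sup_add_finrank_inf_eq (Submodule.span F {v₀})
        (Submodule.span F {⁅s, v₀⁆})
      have := h1le v₀
      have := h1le ⁅s, v₀⁆
      omega
    · intro x hx
      rw [Submodule.mem_sup] at hx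
      obtain ⟨y, hy, z, hz, rfl⟩ := hx
      rw [Submodule.mem_span_singleton] at hy hz
      obtain ⟨c, rfl⟩ := hy
      obtain ⟨d, rfl⟩ := hz
      rw [lie_add, lie_smul, lie_smul]
      apply Submodule.add_mem
      · exact Submodule.smul_mem _ c
          (Submodule.mem_sup_right (Submodule.mem_span_singleton_self _))
      · apply Submodule.smul_mem
        have : ⁅s, ⁅s, v₀⁆⁆ = c₀ • v₀ := by
          rw [← hfapp, ← hfapp, hfv₀]
        rw [this]
        exact Submodule.smul_mem _ c₀
          (Submodule.mem_sup_left (Submodule.mem_span_singleton_self _))
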